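/- Let n ≥ 1 be a natural number, p ∈ [0,1], and let X be a random variable with the binomial distribution Bin(n,p). Fix δ ∈ (0,1). Define the one-sided Clopper–Pearson upper confidence bound p_U^δ(k) = sup{R ∈ [0,1] : F_{n,R}(k) ≥ δ} (with p_U^δ(k) = 1 for k ≥ n). Then Pr(p ≤ p_U^δ(X)) ≥ 1 − δ; that is, the upper confidence bound covers the true success probability with probability at least 1 − δ. -/

import Mathlib

open scoped Classical BigOperators

/-- The probability mass function of the binomial distribution `Bin(n, p)` at `j`. -/
noncomputable def binomPMF (n : ℕ) (p : ℝ) (j : ℕ) : ℝ :=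
  (n.choose j : ℝ) * p ^ j * (1 - p) ^ (n - j)

/-- The cumulative distribution function of `Bin(n, p)` at `k`:
`F_{n,p}(k) = Σ_{j=0}^{min(k,n)} C(n,j) p^j (1-p)^{n-j}`. -/
noncomputable def binomCDF (n : ℕ) (p : ℝ) (k : ℕ) : ℝ :=
  ∑ j ∈ Finset.range (min k n + 1), binomPMF n p j

/-- One-sided Clopper–Pearson upper confidence bound at count `k` and level `δ`:
`sup {R ∈ [0,1] : F_{n,R}(k) ≥ δ}`. -/
noncomputable def cpUpper (n : ℕ) (δ : ℝ) (k : ℕ) : ℝ :=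
  sSup {R : ℝ | R ∈ Set.Icc (0 : ℝ) 1 ∧ δ ≤ binomCDF n R k}

/-- One-sided Clopper–Pearson lower confidence bound at count `k` and level `δ`:
`inf {R ∈ [0,1] : 1 - F_{n,R}(k-1) ≥ δ}` for `k ≥ 1`, and `0` for `k = 0`. -/
noncomputable def cpLower (n : ℕ) (δ : ℝ) : ℕ → ℝ
  | 0 => 0
  | k + 1 => sInf {R : ℝ | R ∈ Set.Icc (0 : ℝ) 1 ∧ δ ≤ 1 - binomCDF n R k}

lemma binomPMF_nonneg {n : ℕ} {p : ℝ} (hp : p ∈ Set.Icc (0 : ℝ) 1) (j : ℕ) :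
    0 ≤ binomPMF n p j := by
  obtain ⟨h0, h1⟩ := hp
  have h1' : (0:ℝ) ≤ 1 - p := by linarith
  unfold binomPMF
  positivity

lemma binomPMF_sum {n : ℕ} {p : ℝ} :
    ∑ j ∈ Finset.range (n + 1), binomPMF n p j = 1 := by
  have h := add_pow p (1 - p) n
  have hp1 : p + (1 - p) = 1 := by ring
  rw [hp1, one_pow] at h
  rw [h]
  apply Finset.sum_congr rfl
  intro j _
  unfold binomPMF
  ring

/-- One-sided Clopper–Pearson upper bound coverage: Pr(p ≤ p_U^δ(X)) ≥ 1 - δ. -/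
theorem clopperPearson_upper_coverage
    (n : ℕ) (hn : 1 ≤ n) (p : ℝ) (hp : p ∈ Set.Icc (0 : ℝ) 1)
    (δ : ℝ) (hδ : δ ∈ Set.Ioo (0 : ℝ) 1) :
    1 - δ ≤ ∑ j ∈ Finset.range (n + 1),
      (if p ≤ cpUpper n δ j then binomPMF n p j else 0) := by
  have hpm := binomPMF_nonneg (n := n) hp
  -- step 1: pointwise comparison with the CDF condition
  have hstep : ∀ j, (if δ ≤ binomCDF n p j then binomPMF n p j else 0)
      ≤ (if p ≤ cpUpper n δ j then binomPMF n p j else 0) := by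
    intro j
    by_cases h : δ ≤ binomCDF n p j
    · have hmem : p ∈ {R : ℝ | R ∈ Set.Icc (0:ℝ) 1 ∧ δ ≤ binomCDF n R j} := ⟨hp, h⟩
      have hbdd : BddAbove {R : ℝ | R ∈ Set.Icc (0:ℝ) 1 ∧ δ ≤ binomCDF n R j} :=
        ⟨1, fun x hx => hx.1.2⟩
      have hle : p ≤ cpUpper n δ j := le_csSup hbdd hmem
      simp [h, hle]
    · simp only [h, if_false]
      split_ifs with h'
      · exact hpm j
      · exact le_rfl
  -- step 2: the CDF-condition sum is at least 1 - δ
  have key : 1 - δ ≤ ∑ j ∈ Finset.range (n + 1),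
      (if δ ≤ binomCDF n p j then binomPMF n p j else 0) := by
    have hsplit := Finset.sum_filter_add_sum_filter_not (Finset.range (n+1))
      (fun j => δ ≤ binomCDF n p j) (binomPMF n p)
    have hfil : ∑ j ∈ Finset.range (n + 1),
        (if δ ≤ binomCDF n p j then binomPMF n p j else 0)
        = ∑ j ∈ (Finset.range (n+1)).filter (fun j => δ ≤ binomCDF n p j),
            binomPMF n p j := (Finset.sum_filter _ _).symm
    set T := (Finset.range (n+1)).filter (fun j => ¬ δ ≤ binomCDF n p j) with hT
    have hTle : ∑ j ∈ T, binomPMF n p j ≤ δ := by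
      by_cases hne : T.Nonempty
      · set m := T.max' hne with hm
        have hmT : m ∈ T := T.max'_mem hne
        have hmlt : binomCDF n p m < δ := by
          have := (Finset.mem_filter.mp hmT).2
          linarith [lt_of_not_ge this]
        have hmn : m ≤ n := by
          have := Finset.mem_range.mp (Finset.mem_filter.mp hmT).1
          omega
        have hsub : T ⊆ Finset.range (m + 1) := by
          intro j hj
          exact Finset.mem_range.mpr (Nat.lt_succ_of_le (Finset.le_max' T j hj))
        have hsum : ∑ j ∈ T, binomPMF n p j ≤ ∑ j ∈ Finset.range (m+1), binomPMF n p j :=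
          Finset.sum_le_sum_of_subset_of_nonneg hsub (fun j _ _ => hpm j)
        have hcdf : ∑ j ∈ Finset.range (m+1), binomPMF n p j = binomCDF n p m := by
          unfold binomCDF
          rw [min_eq_left hmn]
        linarith
      · rw [Finset.not_nonempty_iff_eq_empty] at hne
        rw [hne, Finset.sum_empty]
        exact le_of_lt hδ.1
    have htot : ∑ j ∈ Finset.range (n + 1), binomPMF n p j = 1 := binomPMF_sum
    rw [hfil]
    have := hsplit
    -- sum over filter (condition) = total - sum over T
    linarith [hTle, htot, this]
  calc 1 - δ ≤ _ := key
    _ ≤ _ := Finset.sum_le_sum (fun j _ => hstep j)
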